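/- Let (X, μ) be a measure space, let L be a finite index type, let (Y ℓ)_{ℓ∈L} be an orthonormal family in L²(μ; ℂ), and let v : X → ℝ be measurable with α ≤ v x ≤ β almost everywhere, for reals α ≤ β. Define E : Matrix L L ℂ by E j ℓ = ∫ conj(Y j x) · (Y ℓ x) · v x ∂μ(x). Let λ ∈ ℝ and let q : L → ℂ be nonzero with E.mulVec q = λ • q, and write q̃(x) := Σ_{ℓ∈L} q ℓ · Y ℓ x. If the set {x : v x < β and q̃ x ≠ 0} has positive μ-measure, then λ < β; and if the set {x : α < v x and q̃ x ≠ 0} has positive μ-measure, then α < λ. -/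

import Mathlib

open MeasureTheory ComplexConjugate Matrix

/-- Theorem 3.3 (strict form): for an orthonormal family `(Y ℓ)` in `L²(μ; ℂ)`, a
measurable mask `v` with `α ≤ v ≤ β` a.e., and a real eigenvalue `λ` of
`E j ℓ = ∫ conj(Y j x) * Y ℓ x * v x dμ` with eigenvector `q ≠ 0`, writing
`q̃ x = Σ_ℓ q ℓ * Y ℓ x`: if `{x | v x < β ∧ q̃ x ≠ 0}` has positive measure then
`λ < β`, and if `{x | α < v x ∧ q̃ x ≠ 0}` has positive measure then `α < λ`. -/
theorem stmt_6 {X : Type*} [MeasurableSpace X] {μ : Measure X}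
    {L : Type*} [Fintype L]
    (Y : L → Lp ℂ 2 μ) (hY : Orthonormal ℂ Y)
    (v : X → ℝ) (hv : Measurable v) (α β : ℝ) (hαβ : α ≤ β)
    (hbound : ∀ᵐ x ∂μ, α ≤ v x ∧ v x ≤ β)
    (E : Matrix L L ℂ)
    (hE : ∀ j ℓ, E j ℓ = ∫ x, conj (Y j x) * (Y ℓ x) * (v x : ℂ) ∂μ)
    (lam : ℝ) (q : L → ℂ) (hq : q ≠ 0)
    (heig : E.mulVec q = (lam : ℂ) • q) :
    (0 < μ {x | v x < β ∧ (∑ ℓ, q ℓ * Y ℓ x) ≠ 0} → lam < β) ∧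
    (0 < μ {x | α < v x ∧ (∑ ℓ, q ℓ * Y ℓ x) ≠ 0} → α < lam) := by
  classical
  set f : X → ℂ := fun x => ∑ ℓ, q ℓ * Y ℓ x with hf
  set c : ℝ := max |α| |β| with hc
  have hvb : ∀ᵐ x ∂μ, ‖(v x : ℂ)‖ ≤ c := by
    filter_upwards [hbound] with x hx
    rw [Complex.norm_real, Real.norm_eq_abs, abs_le]
    have h1 := le_max_left |α| |β|
    have h2 := le_max_right |α| |β|
    have h3 := neg_abs_le α
    have h4 := le_abs_self β
    exact ⟨by linarith [hx.1], by linarith [hx.2]⟩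
  have hvm : AEStronglyMeasurable (fun x => (v x : ℂ)) μ :=
    (Complex.measurable_ofReal.comp hv).aestronglyMeasurable
  -- basic integrabilities
  have h1 : ∀ j ℓ : L, Integrable (fun x => conj (Y j x) * Y ℓ x) μ := by
    intro j ℓ
    have := L2.integrable_inner (𝕜 := ℂ) (Y j) (Y ℓ)
    simpa [RCLike.inner_apply, mul_comm] using this
  have h2 : ∀ j ℓ : L, Integrable (fun x => conj (Y j x) * Y ℓ x * (v x : ℂ)) μ := by
    intro j ℓ
    have := (h1 j ℓ).bdd_mul (c := c) hvm hvb
    refine this.congr (Filter.Eventually.of_forall fun x => ?_)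
    ring
  -- orthonormality as integrals
  have horth : ∀ j ℓ : L, (∫ x, conj (Y j x) * Y ℓ x ∂μ) = if j = ℓ then (1:ℂ) else 0 := by
    intro j ℓ
    have h := L2.inner_def (𝕜 := ℂ) (Y j) (Y ℓ)
    simp only [RCLike.inner_apply] at h
    rw [show (∫ x, conj (Y j x) * Y ℓ x ∂μ) = ∫ a, Y ℓ a * conj (Y j a) ∂μ from
      integral_congr_ae (Filter.Eventually.of_forall fun x => mul_comm _ _), ← h]
    exact orthonormal_iff_ite.mp hY j ℓ
  -- pointwise expansion of conj f * f and conj f * f * v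
  have hexp : ∀ x : X, conj (f x) * f x =
      ∑ j, ∑ ℓ, (conj (q j) * q ℓ) * (conj (Y j x) * Y ℓ x) := by
    intro x
    simp only [hf, map_sum, Finset.sum_mul_sum]
    refine Finset.sum_congr rfl fun j _ => Finset.sum_congr rfl fun ℓ _ => by
      rw [RingHom.map_mul]; ring
  have hexpv : ∀ x : X, conj (f x) * f x * (v x : ℂ) =
      ∑ j, ∑ ℓ, (conj (q j) * q ℓ) * (conj (Y j x) * Y ℓ x * (v x : ℂ)) := by
    intro x
    rw [hexp x, Finset.sum_mul]
    refine Finset.sum_congr rfl fun j _ => ?_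
    rw [Finset.sum_mul]
    exact Finset.sum_congr rfl fun ℓ _ => by ring
  set Sr : ℝ := ∑ ℓ, Complex.normSq (q ℓ) with hSr
  have hSc : ((Sr : ℂ)) = ∑ ℓ, conj (q ℓ) * q ℓ := by
    rw [hSr, Complex.ofReal_sum]
    exact Finset.sum_congr rfl fun ℓ _ => by
      rw [mul_comm, Complex.mul_conj]
  -- integral of conj f * f
  have hmass : (∫ x, conj (f x) * f x ∂μ) = (Sr : ℂ) := by
    calc (∫ x, conj (f x) * f x ∂μ)
        = ∫ x, ∑ j, ∑ ℓ, (conj (q j) * q ℓ) * (conj (Y j x) * Y ℓ x) ∂μ := by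
          simp_rw [hexp]
      _ = ∑ j, ∑ ℓ, (conj (q j) * q ℓ) * ∫ x, conj (Y j x) * Y ℓ x ∂μ := by
          rw [integral_finset_sum _ fun j _ => integrable_finset_sum _
            fun ℓ _ => ((h1 j ℓ).const_mul _)]
          exact Finset.sum_congr rfl fun j _ => by
            rw [integral_finset_sum _ fun ℓ _ => ((h1 j ℓ).const_mul _)]
            exact Finset.sum_congr rfl fun ℓ _ => integral_const_mul _ _
      _ = (Sr : ℂ) := by
          simp only [horth, mul_ite, mul_one, mul_zero, Finset.sum_ite_eq, Finset.mem_univ,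
            if_true, hSc]
  -- integral of conj f * f * v equals lam * Sr
  have hT : (∫ x, conj (f x) * f x * (v x : ℂ) ∂μ) = (lam : ℂ) * (Sr : ℂ) := by
    calc (∫ x, conj (f x) * f x * (v x : ℂ) ∂μ)
        = ∑ j, ∑ ℓ, (conj (q j) * q ℓ) * ∫ x, conj (Y j x) * Y ℓ x * (v x : ℂ) ∂μ := by
          simp_rw [hexpv]
          rw [integral_finset_sum _ fun j _ => integrable_finset_sum _
            fun ℓ _ => ((h2 j ℓ).const_mul _)]
          exact Finset.sum_congr rfl fun j _ => by
            rw [integral_finset_sum _ fun ℓ _ => ((h2 j ℓ).const_mul _)]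
            exact Finset.sum_congr rfl fun ℓ _ => integral_const_mul _ _
      _ = ∑ j, conj (q j) * ∑ ℓ, E j ℓ * q ℓ := by
          refine Finset.sum_congr rfl fun j _ => ?_
          rw [Finset.mul_sum]
          refine Finset.sum_congr rfl fun ℓ _ => ?_
          rw [hE j ℓ]
          ring
      _ = (lam : ℂ) * (Sr : ℂ) := by
          have : ∀ j, ∑ ℓ, E j ℓ * q ℓ = (lam : ℂ) * q j := by
            intro j
            have := congrFun heig j
            simpa [Matrix.mulVec, dotProduct, Pi.smul_apply, smul_eq_mul] using this
          simp_rw [this]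
          rw [hSc, Finset.mul_sum]
          exact Finset.sum_congr rfl fun ℓ _ => by ring
  -- realify
  set g : X → ℝ := fun x => Complex.normSq (f x) with hg
  have hgc : ∀ x, ((g x : ℂ)) = conj (f x) * f x := fun x => by
    rw [hg, mul_comm, Complex.mul_conj]
  have hgvc : ∀ x, ((g x * v x : ℝ) : ℂ) = conj (f x) * f x * (v x : ℂ) := fun x => by
    rw [Complex.ofReal_mul, hgc]
  have hcffInt : Integrable (fun x => conj (f x) * f x) μ := by
    refine (integrable_finset_sum (μ := μ) (Finset.univ : Finset L)
      (f := fun j x => ∑ ℓ, (conj (q j) * q ℓ) * (conj (Y j x) * Y ℓ x))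
      fun j _ => integrable_finset_sum (Finset.univ : Finset L)
      fun ℓ _ => ((h1 j ℓ).const_mul (conj (q j) * q ℓ))).congr
      (Filter.Eventually.of_forall fun x => (hexp x).symm)
  have hcffvInt : Integrable (fun x => conj (f x) * f x * (v x : ℂ)) μ := by
    refine (integrable_finset_sum (μ := μ) (Finset.univ : Finset L)
      (f := fun j x => ∑ ℓ, (conj (q j) * q ℓ) * (conj (Y j x) * Y ℓ x * (v x : ℂ)))
      fun j _ => integrable_finset_sum (Finset.univ : Finset L)
      fun ℓ _ => ((h2 j ℓ).const_mul (conj (q j) * q ℓ))).congr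
      (Filter.Eventually.of_forall fun x => (hexpv x).symm)
  have hre1 : ∀ x, RCLike.re ((starRingEnd ℂ) (f x) * f x) = g x := fun x => by
    rw [← hgc x]; simp
  have hre2 : ∀ x, RCLike.re ((starRingEnd ℂ) (f x) * f x * (v x : ℂ)) = g x * v x := fun x => by
    rw [← hgvc x]; simp
  have hgInt : Integrable g μ := by
    have := hcffInt.re
    refine this.congr (Filter.Eventually.of_forall fun x => ?_)
    exact hre1 x
  have hgvInt : Integrable (fun x => g x * v x) μ := by
    have := hcffvInt.re
    refine this.congr (Filter.Eventually.of_forall fun x => ?_)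
    exact hre2 x
  have hmassR : (∫ x, g x ∂μ) = Sr := by
    have h := integral_re hcffInt
    rw [hmass] at h
    simp_rw [hre1] at h
    simpa using h
  have hTR : (∫ x, g x * v x ∂μ) = lam * Sr := by
    have h := integral_re hcffvInt
    rw [hT, ← Complex.ofReal_mul] at h
    simp_rw [hre2] at h
    simpa using h
  have hSrpos : 0 < Sr := by
    obtain ⟨ℓ₀, hℓ₀⟩ : ∃ ℓ, q ℓ ≠ 0 := by
      by_contra h
      push_neg at h
      exact hq (funext h)
    exact Finset.sum_pos' (fun ℓ _ => Complex.normSq_nonneg _)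
      ⟨ℓ₀, Finset.mem_univ _, Complex.normSq_pos.mpr hℓ₀⟩
  have hgnn : ∀ x, 0 ≤ g x := fun x => Complex.normSq_nonneg _
  constructor
  · intro hpos
    set h : X → ℝ := fun x => g x * (β - v x) with hh
    have hhInt : Integrable h μ := by
      have := (hgInt.const_mul β).sub hgvInt
      refine this.congr (Filter.Eventually.of_forall fun x => ?_)
      simp only [hh, Pi.sub_apply]; ring
    have hhnn : 0 ≤ᵐ[μ] h := by
      filter_upwards [hbound] with x hx
      exact mul_nonneg (hgnn x) (by linarith [hx.2])
    have hsub : {x | v x < β ∧ f x ≠ 0} ⊆ Function.support h := by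
      intro x hx
      have : 0 < h x := mul_pos (Complex.normSq_pos.mpr hx.2) (by linarith [hx.1])
      exact ne_of_gt this
    have hint : 0 < ∫ x, h x ∂μ := by
      rw [integral_pos_iff_support_of_nonneg_ae hhnn hhInt]
      exact lt_of_lt_of_le hpos (measure_mono hsub)
    have : (∫ x, h x ∂μ) = β * Sr - lam * Sr := by
      have heq : ∀ x, h x = β * g x - g x * v x := fun x => by simp only [hh]; ring
      simp_rw [heq]
      rw [integral_sub (hgInt.const_mul β) hgvInt, integral_const_mul, hmassR, hTR]
    rw [this] at hint
    nlinarith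
  · intro hpos
    set h : X → ℝ := fun x => g x * (v x - α) with hh
    have hhInt : Integrable h μ := by
      have := hgvInt.sub (hgInt.const_mul α)
      refine this.congr (Filter.Eventually.of_forall fun x => ?_)
      simp only [hh, Pi.sub_apply]; ring
    have hhnn : 0 ≤ᵐ[μ] h := by
      filter_upwards [hbound] with x hx
      exact mul_nonneg (hgnn x) (by linarith [hx.1])
    have hsub : {x | α < v x ∧ f x ≠ 0} ⊆ Function.support h := by
      intro x hx
      have : 0 < h x := mul_pos (Complex.normSq_pos.mpr hx.2) (by linarith [hx.1])
      exact ne_of_gt this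
    have hint : 0 < ∫ x, h x ∂μ := by
      rw [integral_pos_iff_support_of_nonneg_ae hhnn hhInt]
      exact lt_of_lt_of_le hpos (measure_mono hsub)
    have : (∫ x, h x ∂μ) = lam * Sr - α * Sr := by
      have heq : ∀ x, h x = g x * v x - α * g x := fun x => by simp only [hh]; ring
      simp_rw [heq]
      rw [integral_sub hgvInt (hgInt.const_mul α), integral_const_mul, hmassR, hTR]
    rw [this] at hint
    nlinarith
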